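/- arXiv:1009.1968 — 5 statements merged into one kernel-verified Lean document; each statement's English description precedes it below -/
import Mathlib

section
/- Let β > 0, G > 0, b > 0. The unique minimizer of the Thomas-Fermi functional E^{TF}[ρ] = ∫_{ℝ²} ((-β|x|² + |x|⁴/4)ρ + (bG/2)ρ²) dx over ρ ≥ 0 with ∫ρ = 1 and ∫|x|²ρ < ∞ is ρ(x) = max((μ + β|x|² - |x|⁴/4)/(bG), 0), where μ is the unique constant making ∫ρ = 1. -/
open MeasureTheory

private lemma tf_pointwise (c μ V t r : ℝ) (hc : 0 < c)
    (hr : r = max ((μ - V) / c) 0) :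
    V * t + c / 2 * t ^ 2
      = (V * r + c / 2 * r ^ 2) + μ * (t - r) + c / 2 * (t - r) ^ 2
        + max (V - μ) 0 * t := by
  rcases le_or_gt (μ - V) 0 with h | h
  · have hr0 : r = 0 := by
      rw [hr, max_eq_right]
      exact div_nonpos_of_nonpos_of_nonneg h hc.le
    have hmax : max (V - μ) 0 = V - μ := max_eq_left (by linarith)
    rw [hr0, hmax]; ring
  · have hr0 : r = (μ - V) / c := by
      rw [hr, max_eq_left]
      positivity
    have hmax : max (V - μ) 0 = 0 := max_eq_right (by linarith)
    rw [hr0, hmax]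
    field_simp
    ring

/-- The explicit Thomas-Fermi profile is the unique minimizer of the Thomas-Fermi
functional among nonnegative densities of unit mass with finite second moment. -/
theorem stmt_7 (β G b μ : ℝ) (hβ : 0 < β) (hG : 0 < G) (hb : 0 < b)
    (ρ : EuclideanSpace ℝ (Fin 2) → ℝ)
    (hρ : ∀ x, ρ x = max ((μ + β * ‖x‖ ^ 2 - ‖x‖ ^ 4 / 4) / (b * G)) 0)
    (hmassρ : ∫ x : EuclideanSpace ℝ (Fin 2), ρ x = 1) :
    ∀ σ : EuclideanSpace ℝ (Fin 2) → ℝ,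
      (∀ x, 0 ≤ σ x) →
      Integrable σ →
      Integrable (fun x => ‖x‖ ^ 2 * σ x) →
      Integrable (fun x => ‖x‖ ^ 4 * σ x) →
      Integrable (fun x => σ x ^ 2) →
      (∫ x : EuclideanSpace ℝ (Fin 2), σ x = 1) →
      ((∫ x : EuclideanSpace ℝ (Fin 2),
          ((-β * ‖x‖ ^ 2 + ‖x‖ ^ 4 / 4) * ρ x + (b * G / 2) * ρ x ^ 2))
        ≤ ∫ x : EuclideanSpace ℝ (Fin 2),
            ((-β * ‖x‖ ^ 2 + ‖x‖ ^ 4 / 4) * σ x + (b * G / 2) * σ x ^ 2))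
      ∧ ((∫ x : EuclideanSpace ℝ (Fin 2),
            ((-β * ‖x‖ ^ 2 + ‖x‖ ^ 4 / 4) * σ x + (b * G / 2) * σ x ^ 2))
          = (∫ x : EuclideanSpace ℝ (Fin 2),
              ((-β * ‖x‖ ^ 2 + ‖x‖ ^ 4 / 4) * ρ x + (b * G / 2) * ρ x ^ 2))
        → σ =ᵐ[volume] ρ) := by
  intro σ hσ0 hσint hσ2 hσ4 hσsq hmassσ
  have hc0 : 0 < b * G := mul_pos hb hG
  set c := b * G with hc
  -- notation
  set V : EuclideanSpace ℝ (Fin 2) → ℝ := fun x => -β * ‖x‖ ^ 2 + ‖x‖ ^ 4 / 4 with hV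
  have hρ' : ∀ x, ρ x = max ((μ - V x) / c) 0 := by
    intro x
    rw [hρ x, hV]
    ring_nf
  have hVcont : Continuous V := by
    apply Continuous.add
    · exact (continuous_const.mul ((continuous_norm).pow 2))
    · exact ((continuous_norm).pow 4).div_const 4
  have hρcont : Continuous ρ := by
    have : Continuous fun x => max ((μ - V x) / c) 0 :=
      ((continuous_const.sub hVcont).div_const c).max continuous_const
    exact this.congr fun x => (hρ' x).symm
  have hρ0 : ∀ x, 0 ≤ ρ x := fun x => by rw [hρ' x]; exact le_max_right _ _
  -- compact support of ρ
  set R : ℝ := Real.sqrt (8 * β + 8 * |μ| + 1) with hR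
  have hρsupp : HasCompactSupport ρ := by
    apply HasCompactSupport.intro (isCompact_closedBall (0 : EuclideanSpace ℝ (Fin 2)) R)
    intro x hx
    simp only [Metric.mem_closedBall, dist_zero_right, not_le] at hx
    have hR0 : 0 ≤ R := Real.sqrt_nonneg _
    have hx2 : 8 * β + 8 * |μ| + 1 ≤ ‖x‖ ^ 2 := by
      have := Real.sq_sqrt (by positivity : (0:ℝ) ≤ 8 * β + 8 * |μ| + 1)
      nlinarith [hx, norm_nonneg x]
    have h1 : (1:ℝ) ≤ ‖x‖ ^ 2 := by nlinarith [abs_nonneg μ, hβ.le]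
    have hnp : μ + β * ‖x‖ ^ 2 - ‖x‖ ^ 4 / 4 ≤ 0 := by
      have h4 : ‖x‖ ^ 4 = ‖x‖ ^ 2 * ‖x‖ ^ 2 := by ring
      nlinarith [abs_nonneg μ, le_abs_self μ, sq_nonneg (‖x‖^2)]
    rw [hρ x]
    exact max_eq_right (div_nonpos_of_nonpos_of_nonneg (by linarith) hc0.le)
  -- integrability of φ * ρ for continuous φ
  have key : ∀ φ : EuclideanSpace ℝ (Fin 2) → ℝ, Continuous φ →
      Integrable (fun x => φ x * ρ x) := by
    intro φ hφ
    exact (hφ.mul hρcont).integrable_of_hasCompactSupport (hρsupp.mul_left)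
  have hρint : Integrable ρ := by
    have := key (fun _ => 1) continuous_const
    simpa using this
  have hρsq : Integrable (fun x => ρ x ^ 2) := by
    have := key ρ hρcont
    refine this.congr (Filter.EventuallyEq.of_eq ?_)
    funext x; ring
  have hVρ : Integrable (fun x => V x * ρ x) := key V hVcont
  -- ρ bounded
  obtain ⟨C, hC⟩ := hρcont.bounded_above_of_compact_support hρsupp
  have hσρ : Integrable (fun x => ρ x * σ x) :=
    hσint.bdd_mul hρcont.aestronglyMeasurable (Filter.Eventually.of_forall hC)
  have hdiffsq : Integrable (fun x => (σ x - ρ x) ^ 2) := by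
    have : Integrable (fun x => σ x ^ 2 - 2 * (ρ x * σ x) + ρ x ^ 2) :=
      (hσsq.sub (hσρ.const_mul 2)).add hρsq
    refine this.congr (Filter.EventuallyEq.of_eq ?_)
    funext x; ring
  -- h term
  set h : EuclideanSpace ℝ (Fin 2) → ℝ := fun x => max (V x - μ) 0 * σ x with hh
  have hhint : Integrable h := by
    apply Integrable.mono'
      (g := fun x => β * (‖x‖ ^ 2 * σ x) + (1/4) * (‖x‖ ^ 4 * σ x) + |μ| * σ x)
      (((hσ2.const_mul β).add (hσ4.const_mul (1/4))).add (hσint.const_mul |μ|))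
    · exact ((hVcont.sub continuous_const).max continuous_const).aestronglyMeasurable.mul
        hσint.aestronglyMeasurable
    · filter_upwards with x
      rw [Real.norm_eq_abs, abs_mul, abs_of_nonneg (le_max_right _ _ : (0:ℝ) ≤ max (V x - μ) 0),
        abs_of_nonneg (hσ0 x)]
      have h1 : max (V x - μ) 0 ≤ |V x| + |μ| :=
        max_le (by linarith [le_abs_self (V x), neg_abs_le μ])
          (add_nonneg (abs_nonneg _) (abs_nonneg _))
      have h2 : |V x| ≤ β * ‖x‖ ^ 2 + ‖x‖ ^ 4 / 4 := by
        rw [hV]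
        calc |(-β * ‖x‖ ^ 2 + ‖x‖ ^ 4 / 4)| ≤ |(-β * ‖x‖ ^ 2)| + |‖x‖ ^ 4 / 4| := abs_add_le _ _
        _ = β * ‖x‖ ^ 2 + ‖x‖ ^ 4 / 4 := by
            rw [abs_of_nonpos (by nlinarith [sq_nonneg ‖x‖] : -β * ‖x‖ ^ 2 ≤ 0), abs_of_nonneg (by positivity : (0:ℝ) ≤ ‖x‖ ^ 4 / 4)]
            ring
      have h3 : |V x| + |μ| ≤ β * ‖x‖ ^ 2 + ‖x‖ ^ 4 / 4 + |μ| := by linarith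
      have := mul_le_mul_of_nonneg_right (h1.trans h3) (hσ0 x)
      calc max (V x - μ) 0 * σ x ≤ (β * ‖x‖ ^ 2 + ‖x‖ ^ 4 / 4 + |μ|) * σ x := this
      _ = β * (‖x‖ ^ 2 * σ x) + (1/4) * (‖x‖ ^ 4 * σ x) + |μ| * σ x := by ring
  have hhnn : 0 ≤ ∫ x, h x := integral_nonneg fun x =>
    mul_nonneg (le_max_right _ _) (hσ0 x)
  have hdsqnn : 0 ≤ ∫ x, (σ x - ρ x) ^ 2 := integral_nonneg fun x => sq_nonneg _
  -- functionals
  set Fρ : EuclideanSpace ℝ (Fin 2) → ℝ :=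
    fun x => (-β * ‖x‖ ^ 2 + ‖x‖ ^ 4 / 4) * ρ x + c / 2 * ρ x ^ 2 with hFρ
  set Fσ : EuclideanSpace ℝ (Fin 2) → ℝ :=
    fun x => (-β * ‖x‖ ^ 2 + ‖x‖ ^ 4 / 4) * σ x + c / 2 * σ x ^ 2 with hFσ
  set D : EuclideanSpace ℝ (Fin 2) → ℝ :=
    fun x => μ * (σ x - ρ x) + c / 2 * (σ x - ρ x) ^ 2 + h x with hD
  have i1 : Integrable (fun x => μ * (σ x - ρ x)) := (hσint.sub hρint).const_mul μ
  have i2 : Integrable (fun x => c / 2 * (σ x - ρ x) ^ 2) := hdiffsq.const_mul (c/2)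
  have hFρint : Integrable Fρ := hVρ.add (hρsq.const_mul (c/2))
  have hDint : Integrable D := (i1.add i2).add hhint
  have hpt : ∀ x, Fσ x = Fρ x + D x := by
    intro x
    have := tf_pointwise c μ (V x) (σ x) (ρ x) hc0 (hρ' x)
    simp only [hFσ, hFρ, hD, hh, hV] at this ⊢
    linarith [this]
  have hsplit : (∫ x, Fσ x) = (∫ x, Fρ x) + ∫ x, D x := by
    rw [← integral_add hFρint hDint]
    exact integral_congr_ae (Filter.EventuallyEq.of_eq (funext hpt))
  have hDsplit : (∫ x, D x) = μ * ((∫ x, σ x) - ∫ x, ρ x)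
      + c / 2 * (∫ x, (σ x - ρ x) ^ 2) + ∫ x, h x := by
    have i12 : Integrable (fun x => μ * (σ x - ρ x) + c / 2 * (σ x - ρ x) ^ 2) := i1.add i2
    calc (∫ x, D x)
        = (∫ x, (μ * (σ x - ρ x) + c / 2 * (σ x - ρ x) ^ 2)) + ∫ x, h x :=
          integral_add i12 hhint
      _ = ((∫ x, μ * (σ x - ρ x)) + ∫ x, c / 2 * (σ x - ρ x) ^ 2) + ∫ x, h x := by
          rw [integral_add i1 i2]
      _ = μ * ((∫ x, σ x) - ∫ x, ρ x) + c / 2 * (∫ x, (σ x - ρ x) ^ 2) + ∫ x, h x := by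
          rw [integral_const_mul, integral_const_mul, integral_sub hσint hρint]
  have hDval : (∫ x, D x) = c / 2 * (∫ x, (σ x - ρ x) ^ 2) + ∫ x, h x := by
    rw [hDsplit, hmassσ, hmassρ]; ring
  have hDnn : 0 ≤ ∫ x, D x := by
    rw [hDval]
    have : 0 ≤ c / 2 * (∫ x, (σ x - ρ x) ^ 2) := by positivity
    linarith
  constructor
  · rw [hsplit]
    linarith
  · intro heq
    rw [hsplit] at heq
    have hD0 : (∫ x, D x) = 0 := by linarith
    have hsq0 : (∫ x, (σ x - ρ x) ^ 2) = 0 := by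
      rw [hDval] at hD0
      have hcs : 0 ≤ c / 2 * (∫ x, (σ x - ρ x) ^ 2) := mul_nonneg (by positivity) hdsqnn
      have h0 : c / 2 * (∫ x, (σ x - ρ x) ^ 2) = 0 := by linarith
      have hc2 : (0:ℝ) < c / 2 := by positivity
      rcases mul_eq_zero.mp h0 with h' | h'
      · exact absurd h' (ne_of_gt hc2)
      · exact h'
    have : (fun x => (σ x - ρ x) ^ 2) =ᵐ[volume] 0 := by
      rw [← integral_eq_zero_iff_of_nonneg (fun x => sq_nonneg _) hdiffsq]
      exact hsq0
    filter_upwards [this] with x hx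
    have hx' : (σ x - ρ x) ^ 2 = 0 := by simpa using hx
    exact sub_eq_zero.mp (sq_eq_zero_iff.mp hx')
end

section
/- Let β, G, b > 0 with β ≥ (3bG)^{1/3}(8π)^{-1/3}, and let ρ be the Thomas-Fermi density ρ(x) = (1/(bG)) max(μ + β|x|² - |x|⁴/4, 0) with μ = (3bG/(8π))^{2/3} - β² (so that ∫ρ = 1). Then the Thomas-Fermi energy satisfies E^{TF} = ∫_{ℝ²} ((-β|x|² + |x|⁴/4)ρ + (bG/2)ρ²) dx = (3/5)(3bG/(8π))^{2/3} - β². -/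
open MeasureTheory Real Set intervalIntegral


lemma tf_aux (A β k μ : ℝ) (hk : 0 < k) (hβk : k ≤ β) (hμ : μ = k^2 - β^2) :
    ∫ y in Set.Ioi (0:ℝ), y * (A * (μ * max (μ + β*y^2 - (y^2)^2/4) 0
        - (max (μ + β*y^2 - (y^2)^2/4) 0)^2/2))
    = A * ((μ^2/2*(2*β+2*k) - β^2/6*(2*β+2*k)^3 + β/16*(2*β+2*k)^4 - (2*β+2*k)^5/160)
         - (μ^2/2*(2*β-2*k) - β^2/6*(2*β-2*k)^3 + β/16*(2*β-2*k)^4 - (2*β-2*k)^5/160)) / 2 := by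
  set F1 : ℝ → ℝ := fun s => A * (μ * max (μ + β*s - s^2/4) 0
      - (max (μ + β*s - s^2/4) 0)^2/2) with hF1
  have hcontF1 : Continuous F1 := by
    apply Continuous.mul continuous_const
    apply Continuous.sub
    · exact continuous_const.mul ((by fun_prop : Continuous fun s:ℝ => μ + β*s - s^2/4).max continuous_const)
    · exact (((by fun_prop : Continuous fun s:ℝ => μ + β*s - s^2/4).max continuous_const).pow 2).div_const 2
  set g : ℝ → ℝ := fun y => y * F1 (y^2) with hg
  have hcontg : Continuous g := continuous_id.mul (hcontF1.comp (continuous_pow 2))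
  have hsp : (0:ℝ) < 2*β + 2*k := by linarith
  set R : ℝ := Real.sqrt (2*β + 2*k) with hRdef
  have hR : 0 < R := Real.sqrt_pos.mpr hsp
  have hR2 : R^2 = 2*β + 2*k := Real.sq_sqrt hsp.le
  -- g vanishes beyond R
  have hzero : Set.EqOn g 0 (Set.Ioi R) := by
    intro y hy
    have hy' : R < y := hy
    have hy2 : 2*β + 2*k ≤ y^2 := by nlinarith
    have hP : μ + β*y^2 - (y^2)^2/4 ≤ 0 := by nlinarith
    simp only [hg, hF1, max_eq_right hP]
    norm_num
  have hIoc : IntegrableOn g (Set.Ioc 0 R) := hcontg.integrableOn_Ioc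
  have hIoi : IntegrableOn g (Set.Ioi R) :=
    (integrableOn_congr_fun hzero measurableSet_Ioi).mpr (integrableOn_zero)
  have hsplit : Set.Ioi (0:ℝ) = Set.Ioc 0 R ∪ Set.Ioi R := (Set.Ioc_union_Ioi_eq_Ioi hR.le).symm
  have step1 : ∫ y in Set.Ioi (0:ℝ), g y = ∫ y in (0:ℝ)..R, g y := by
    rw [hsplit, MeasureTheory.setIntegral_union (Set.Ioc_disjoint_Ioi le_rfl) measurableSet_Ioi hIoc hIoi,
      MeasureTheory.setIntegral_congr_fun measurableSet_Ioi hzero]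
    simp [intervalIntegral.integral_of_le hR.le]
  -- substitution s = y^2
  have hsub : ∫ y in (0:ℝ)..R, (F1 ∘ (fun y => y^2)) y * (2*y)
      = ∫ s in ((0:ℝ)^2)..(R^2), F1 s := by
    apply intervalIntegral.integral_comp_mul_deriv
    · intro x _; simpa using hasDerivAt_pow 2 x
    · exact (continuous_const.mul continuous_id).continuousOn
    · exact hcontF1
  have step2 : ∫ y in (0:ℝ)..R, g y = (1/2) * ∫ s in (0:ℝ)..(2*β+2*k), F1 s := by
    have : ∀ y, g y = (1/2) * ((F1 ∘ (fun y => y^2)) y * (2*y)) := by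
      intro y; simp only [hg, Function.comp]; ring
    rw [intervalIntegral.integral_congr (fun y _ => this y), intervalIntegral.integral_const_mul,
      hsub]
    norm_num [hR2]
  -- split at s₋
  have hsm : (0:ℝ) ≤ 2*β - 2*k := by linarith
  have hadj : (∫ s in (0:ℝ)..(2*β-2*k), F1 s) + ∫ s in (2*β-2*k)..(2*β+2*k), F1 s
      = ∫ s in (0:ℝ)..(2*β+2*k), F1 s :=
    intervalIntegral.integral_add_adjacent_intervals
      (hcontF1.intervalIntegrable _ _) (hcontF1.intervalIntegrable _ _)
  have hfirst : ∫ s in (0:ℝ)..(2*β-2*k), F1 s = 0 := by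
    have hEq : Set.EqOn F1 0 (Set.uIcc 0 (2*β-2*k)) := by
      intro s hs
      rw [Set.uIcc_of_le hsm] at hs
      obtain ⟨h1, h2⟩ := hs
      have hP : μ + β*s - s^2/4 ≤ 0 := by nlinarith
      simp only [hF1, max_eq_right hP]
      norm_num
    rw [intervalIntegral.integral_congr hEq]
    simp
  -- FTC on [s₋, s₊]
  set D : ℝ → ℝ := fun s => A * (μ^2/2 - β^2/2*s^2 + β/4*s^3 - s^4/32) with hD
  have hcontD : Continuous D := by fun_prop
  have hHd : ∀ s : ℝ, HasDerivAt
      (fun s => A * ((μ^2/2 * s - β^2/6 * s^3) + (β/16 * s^4 - s^5/160))) (D s) s := by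
    intro s
    have h := ((((hasDerivAt_id s).const_mul (μ^2/2)).sub
        ((hasDerivAt_pow 3 s).const_mul (β^2/6))).add
        (((hasDerivAt_pow 4 s).const_mul (β/16)).sub
        ((hasDerivAt_pow 5 s).div_const 160))).const_mul A
    exact h.congr_deriv (by simp only [hD, Nat.cast_ofNat]; ring)
  have hsecond : ∫ s in (2*β-2*k)..(2*β+2*k), F1 s
      = A * ((μ^2/2*(2*β+2*k) - β^2/6*(2*β+2*k)^3 + β/16*(2*β+2*k)^4 - (2*β+2*k)^5/160)
           - (μ^2/2*(2*β-2*k) - β^2/6*(2*β-2*k)^3 + β/16*(2*β-2*k)^4 - (2*β-2*k)^5/160)) := by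
    have hEq : Set.EqOn F1 D (Set.uIcc (2*β-2*k) (2*β+2*k)) := by
      intro s hs
      rw [Set.uIcc_of_le (by linarith)] at hs
      obtain ⟨h1, h2⟩ := hs
      have hP : 0 ≤ μ + β*s - s^2/4 := by nlinarith
      simp only [hF1, hD, max_eq_left hP]
      ring
    rw [intervalIntegral.integral_congr hEq,
      intervalIntegral.integral_eq_sub_of_hasDerivAt (fun s _ => hHd s)
        (hcontD.intervalIntegrable _ _)]
    ring
  calc ∫ y in Set.Ioi (0:ℝ), g y = (1/2) * ∫ s in (0:ℝ)..(2*β+2*k), F1 s := by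
        rw [step1, step2]
    _ = (1/2) * ((∫ s in (0:ℝ)..(2*β-2*k), F1 s) + ∫ s in (2*β-2*k)..(2*β+2*k), F1 s) := by
        rw [hadj]
    _ = _ := by rw [hfirst, hsecond]; ring


theorem stmt_9 (β G b : ℝ) (hβ : 0 < β) (hG : 0 < G) (hb : 0 < b)
    (hcrit : β ≥ (3 * b * G) ^ ((1 : ℝ) / 3) * (8 * Real.pi) ^ (-(1 : ℝ) / 3))
    (μ : ℝ) (hμ : μ = (3 * b * G / (8 * Real.pi)) ^ ((2 : ℝ) / 3) - β ^ 2)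
    (ρ : EuclideanSpace ℝ (Fin 2) → ℝ)
    (hρ : ∀ x, ρ x = (1 / (b * G)) * max (μ + β * ‖x‖ ^ 2 - ‖x‖ ^ 4 / 4) 0) :
    ∫ x : EuclideanSpace ℝ (Fin 2),
        ((-β * ‖x‖ ^ 2 + ‖x‖ ^ 4 / 4) * ρ x + (b * G / 2) * ρ x ^ 2)
      = (3 / 5) * (3 * b * G / (8 * Real.pi)) ^ ((2 : ℝ) / 3) - β ^ 2 := by
  have hπ : 0 < Real.pi := Real.pi_pos
  set c : ℝ := 3 * b * G / (8 * Real.pi) with hc_def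
  have hc : 0 < c := by positivity
  set k : ℝ := c ^ ((1:ℝ)/3) with hk_def
  have hk : 0 < k := Real.rpow_pos_of_pos hc _
  have hk3 : k ^ 3 = c := by
    rw [hk_def, ← Real.rpow_natCast (c ^ ((1:ℝ)/3)) 3, ← Real.rpow_mul hc.le]
    norm_num
  have hk2 : c ^ ((2:ℝ)/3) = k ^ 2 := by
    rw [hk_def, ← Real.rpow_natCast (c ^ ((1:ℝ)/3)) 2, ← Real.rpow_mul hc.le]
    norm_num
  have hβk : k ≤ β := by
    have he : (3*b*G) ^ ((1:ℝ)/3) * (8*Real.pi) ^ (-(1:ℝ)/3) = k := by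
      rw [hk_def, hc_def, Real.div_rpow (by positivity) (by positivity), neg_div,
        Real.rpow_neg (by positivity)]
      ring
    rw [he] at hcrit
    exact hcrit
  have hμ' : μ = k ^ 2 - β ^ 2 := by rw [hμ, hk2]
  have hbG : (b : ℝ) * G ≠ 0 := by positivity
  have hbGk : b * G = 8 * Real.pi * k ^ 3 / 3 := by
    rw [hk3, hc_def]
    field_simp
  set F2 : ℝ → ℝ := fun y => (1/(b*G)) * (μ * max (μ + β*y^2 - (y^2)^2/4) 0
      - (max (μ + β*y^2 - (y^2)^2/4) 0)^2/2) with hF2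
  have hint : ∀ x : EuclideanSpace ℝ (Fin 2),
      (-β * ‖x‖ ^ 2 + ‖x‖ ^ 4 / 4) * ρ x + (b * G / 2) * ρ x ^ 2 = F2 ‖x‖ := by
    intro x
    rw [hρ x]
    have h4 : ‖x‖ ^ 4 = (‖x‖ ^ 2) ^ 2 := by ring
    rw [h4]
    simp only [hF2]
    generalize ‖x‖ ^ 2 = s
    rcases le_total (μ + β * s - s ^ 2 / 4) 0 with h | h
    · rw [max_eq_right h]
      field_simp
      ring
    · rw [max_eq_left h]
      field_simp
      ring
  rw [MeasureTheory.integral_congr_ae (Filter.Eventually.of_forall hint),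
    MeasureTheory.integral_fun_norm_addHaar volume F2]
  have hvol : volume.real (Metric.ball (0 : EuclideanSpace ℝ (Fin 2)) 1) = Real.pi := by
    rw [measureReal_def, EuclideanSpace.volume_ball]
    have h2 : ((Fintype.card (Fin 2) : ℝ) / 2 + 1) = 2 := by
      simp; norm_num
    rw [h2, Real.Gamma_two]
    simp [Real.sq_sqrt hπ.le, hπ.le]
  rw [hvol]
  simp only [finrank_euclideanSpace_fin, nsmul_eq_mul, smul_eq_mul, Nat.cast_ofNat, pow_one]
  norm_num
  simp only [hF2]
  rw [tf_aux (1/(b*G)) β k μ hk hβk hμ', hμ', hk2, hbGk]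
  have hπ' : Real.pi ≠ 0 := hπ.ne'
  have hk' : k ≠ 0 := hk.ne'
  field_simp
  ring
end

section
/- Let ε > 0, τ in the upper half-plane with imaginary part τ_I, and define u_τ(z) = e^{-|z|²/(2ε)} e^{z²/(2ε)} Θ(√(τ_I/(πε)) z, τ) where Θ is the Jacobi theta function. Then |u_τ| is doubly periodic: |u_τ(z + t)| = |u_τ(z)| for every t in the lattice √(πε/τ_I) ℤ ⊕ √(πε/τ_I) τ ℤ. -/
open Complex

/-- The Jacobi theta function `Θ(v,τ) = (1/i) Σ_{n∈ℤ} (-1)^n e^{iπτ(n+1/2)²} e^{(2n+1)πiv}`. -/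
noncomputable def Theta (v τ : ℂ) : ℂ :=
  (1 / Complex.I) * ∑' n : ℤ,
    (-1 : ℂ) ^ n * Complex.exp (Complex.I * Real.pi * τ * ((n : ℂ) + 1 / 2) ^ 2) *
      Complex.exp ((2 * (n : ℂ) + 1) * Real.pi * Complex.I * v)

section aux
open Real

lemma jt2_qp (k l : ℤ) (w τ : ℂ) :
    jacobiTheta₂ (w + k + l * τ) τ
      = cexp (-(π * I * l ^ 2 * τ) - 2 * π * I * l * w) * jacobiTheta₂ w τ := by
  conv_rhs => erw [← tsum_mul_left, ← (Equiv.addRight l).tsum_eq]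
  refine tsum_congr fun n => ?_
  simp only [jacobiTheta₂_term, Equiv.coe_addRight, Int.cast_add, ← Complex.exp_add]
  rw [show (2 * π * I * n * (w + k + l * τ) + π * I * n ^ 2 * τ : ℂ)
      = ((n * k : ℤ) : ℂ) * (2 * π * I)
        + (-(π * I * l ^ 2 * τ) - 2 * π * I * l * w
            + (2 * π * I * (n + l) * w + π * I * (n + l) ^ 2 * τ)) by push_cast; ring,
    Complex.exp_add, Complex.exp_int_mul_two_pi_mul_I, one_mul]

lemma theta_eq (v τ : ℂ) :
    Theta v τ = 1 / I * cexp (π * I * τ / 4 + π * I * v) * jacobiTheta₂ (v + 1/2 + τ/2) τ := by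
  unfold Theta jacobiTheta₂
  conv_rhs => rw [mul_assoc, ← tsum_mul_left]
  congr 1
  refine tsum_congr fun n => ?_
  rw [show ((-1 : ℂ) ^ n = cexp ((n : ℂ) * (π * I))) from by
      rw [Complex.exp_int_mul, Complex.exp_pi_mul_I],
    jacobiTheta₂_term, ← Complex.exp_add, ← Complex.exp_add, ← Complex.exp_add]
  congr 1
  ring

lemma theta_qp (k l : ℤ) (v τ : ℂ) :
    Theta (v + k + l * τ) τ
      = cexp (π * I * (k - l) - 2 * π * I * l * v - π * I * l ^ 2 * τ) * Theta v τ := by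
  rw [theta_eq, theta_eq,
    show (v + k + l * τ) + 1/2 + τ/2 = (v + 1/2 + τ/2) + k + l * τ by ring, jt2_qp]
  have e : cexp ((π : ℂ) * I * τ / 4 + π * I * (v + k + l * τ))
        * cexp (-((π : ℂ) * I * l ^ 2 * τ) - 2 * π * I * l * (v + 1/2 + τ/2))
      = cexp ((π : ℂ) * I * (k - l) - 2 * π * I * l * v - π * I * l ^ 2 * τ)
        * cexp ((π : ℂ) * I * τ / 4 + π * I * v) := by
    rw [← Complex.exp_add, ← Complex.exp_add]
    congr 1
    ring
  linear_combination (1 / I * jacobiTheta₂ (v + 1/2 + τ/2) τ) * e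

/-- `|u_τ|` is periodic over the lattice `√(πε/τ_I) ℤ ⊕ √(πε/τ_I) τ ℤ`, where
`u_τ(z) = e^{-|z|²/2ε} e^{z²/2ε} Θ(√(τ_I/(πε)) z, τ)`. -/
theorem stmt_12 (ε : ℝ) (hε : 0 < ε) (τ : ℂ) (hτ : 0 < τ.im)
    (u : ℂ → ℂ)
    (hu : ∀ z : ℂ, u z = Complex.exp (-(‖z‖ ^ 2 : ℂ) / (2 * ε)) *
        Complex.exp (z ^ 2 / (2 * ε)) *
        Theta ((Real.sqrt (τ.im / (Real.pi * ε)) : ℂ) * z) τ)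
    (k l : ℤ) (z : ℂ) :
    ‖u (z + (Real.sqrt (Real.pi * ε / τ.im) : ℂ) * ((k : ℂ) + (l : ℂ) * τ))‖ = ‖u z‖ := by
  have hπ : (0 : ℝ) < π := Real.pi_pos
  set s : ℝ := Real.sqrt (τ.im / (π * ε)) with hs
  set c : ℝ := Real.sqrt (π * ε / τ.im) with hc
  have hsc : s * c = 1 := by
    rw [hs, hc, ← Real.sqrt_mul (by positivity)]
    rw [show τ.im / (π * ε) * (π * ε / τ.im) = 1 by field_simp]
    exact Real.sqrt_one
  have hc2 : c ^ 2 = π * ε / τ.im := Real.sq_sqrt (by positivity)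
  have hcτ : c * τ.im = π * ε * s := by
    rw [hs, hc]
    rw [show τ.im = Real.sqrt (τ.im ^ 2) from (Real.sqrt_sq hτ.le).symm,
      ← Real.sqrt_mul (by positivity), show π * ε = Real.sqrt ((π * ε) ^ 2) from
        (Real.sqrt_sq (by positivity)).symm, ← Real.sqrt_mul (by positivity)]
    congr 1
    field_simp
    ring_nf
    rw [Real.sq_sqrt (by positivity), Real.sq_sqrt (by positivity)]
  have key : (s : ℂ) * (z + c * (k + l * τ)) = s * z + k + l * τ := by
    have h1 : (s : ℂ) * c = 1 := by
      rw [← Complex.ofReal_mul, hsc, Complex.ofReal_one]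
    calc (s : ℂ) * (z + c * (k + l * τ)) = s * z + ((s : ℂ) * c) * (k + l * τ) := by ring
      _ = s * z + k + l * τ := by rw [h1]; ring
  rw [hu, hu, key, theta_qp]
  set z' := z + (c : ℂ) * (k + l * τ) with hz'
  set Q : ℂ := (π : ℂ) * I * (k - l) - 2 * π * I * l * ((s : ℂ) * z) - π * I * l ^ 2 * τ with hQ
  set A' : ℂ := -(‖z'‖ ^ 2 : ℂ) / (2 * ε) with hA'
  set B' : ℂ := z' ^ 2 / (2 * ε) with hB'
  set A : ℂ := -(‖z‖ ^ 2 : ℂ) / (2 * ε) with hA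
  set B : ℂ := z ^ 2 / (2 * ε) with hB
  simp only [norm_mul, Complex.norm_exp]
  set X := ‖(Theta ((s : ℂ) * z) τ)‖ with hX
  rw [show rexp A'.re * rexp B'.re * (rexp Q.re * X) = rexp (A'.re + B'.re + Q.re) * X by
      rw [Real.exp_add, Real.exp_add]; ring,
    show rexp A.re * rexp B.re * X = rexp (A.re + B.re) * X by rw [Real.exp_add]]
  have hdiv : ∀ w : ℂ, (w / (2 * (ε : ℂ))).re = w.re / (2 * ε) := by
    intro w
    rw [show (2 * (ε : ℂ)) = ((2 * ε : ℝ) : ℂ) by push_cast; ring, Complex.div_ofReal_re]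
  have hresq : ∀ w : ℂ, (w ^ 2).re = w.re ^ 2 - w.im ^ 2 := by
    intro w; rw [pow_two, Complex.mul_re]; ring
  have hnorm : ∀ w : ℂ, ((-(‖w‖ ^ 2 : ℂ)).re : ℝ) = -(w.re ^ 2 + w.im ^ 2) := by
    intro w
    rw [Complex.neg_re, ← Complex.ofReal_pow, Complex.ofReal_re,
      Complex.sq_norm, Complex.normSq_apply]
    ring
  have him : z'.im = z.im + c * (l * τ.im) := by
    rw [hz']
    simp [Complex.add_im, Complex.mul_im]
  have hQre : Q.re = 2 * π * l * (s * z.im) + π * l ^ 2 * τ.im := by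
    rw [hQ]
    simp [Complex.sub_re, Complex.mul_re, Complex.mul_im, pow_two, Complex.intCast_re, Complex.intCast_im]
  congr 2
  rw [hA', hB', hA, hB, hdiv, hdiv, hdiv, hdiv, hresq, hresq, hnorm, hnorm, hQre, him]
  have hc2' : c ^ 2 * τ.im = π * ε := by rw [hc2]; field_simp
  have hre' : z'.re = z'.re := rfl
  field_simp
  linear_combination (-4 * (l : ℝ) * z.im) * hcτ + (-2 * (l : ℝ) ^ 2 * τ.im) * hc2'

end aux
end

section
/- For every real β, G > 0, b ≥ 1 and C > 0, there exists ε₀ > 0 such that for all 0 < ε < ε₀ the inequality (6/5)(3bG/(8π))^{2/3} - β² - βε/2 - 7ε²/16 ≥ -β n ε + (G e^{-1/12})/(2π ε √n) + n²ε²/4 + 3nε²/4 fails for every positive integer n. Equivalently, for ε small enough there is no positive integer n satisfying this inequality. -/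
set_option maxHeartbeats 1000000


theorem stmt_13 (β G b C : ℝ) (hG : 0 < G) (hb : 1 ≤ b) (hC : 0 < C) :
    ∃ ε₀ : ℝ, 0 < ε₀ ∧ ∀ ε : ℝ, 0 < ε → ε < ε₀ → ∀ n : ℕ, 0 < n →
      ¬((6 / 5) * (3 * b * G / (8 * Real.pi)) ^ ((2 : ℝ) / 3) - β ^ 2 - β * ε / 2
          - 7 * ε ^ 2 / 16
        ≥ -β * n * ε + (G * Real.exp (-1 / 12)) / (2 * Real.pi * ε * Real.sqrt n)
          + n ^ 2 * ε ^ 2 / 4 + 3 * n * ε ^ 2 / 4) := by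
  have hπ : 0 < Real.pi := Real.pi_pos
  set A : ℝ := (6 / 5) * (3 * b * G / (8 * Real.pi)) ^ ((2 : ℝ) / 3) with hAdef
  set c' : ℝ := G * Real.exp (-1 / 12) with hc'def
  have hc' : 0 < c' := mul_pos hG (Real.exp_pos _)
  set D : ℝ := |A| + |β| / 2 + 2 * β ^ 2 + 1 with hDdef
  have hD : 0 < D := by rw [hDdef]; positivity
  set M : ℝ := Real.sqrt (8 * D) with hMdef
  have hM : 0 < M := Real.sqrt_pos.mpr (by linarith)
  have hM2 : M ^ 2 = 8 * D := Real.sq_sqrt (by linarith)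
  clear_value A c' D M
  refine ⟨min 1 (c' ^ 2 / (4 * Real.pi ^ 2 * D ^ 2 * M)), ?_, ?_⟩
  · apply lt_min one_pos
    positivity
  intro ε hε hε₀ n hn
  have hε1 : ε < 1 := lt_of_lt_of_le hε₀ (min_le_left _ _)
  have hε₁ : ε < c' ^ 2 / (4 * Real.pi ^ 2 * D ^ 2 * M) :=
    lt_of_lt_of_le hε₀ (min_le_right _ _)
  rw [not_le]
  have hn1 : (1 : ℝ) ≤ (n : ℝ) := by exact_mod_cast hn
  set s : ℝ := Real.sqrt (n : ℝ) with hsdef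
  have hs : 0 < s := Real.sqrt_pos.mpr (by linarith)
  have hs2 : s ^ 2 = (n : ℝ) := Real.sq_sqrt (by linarith)
  clear_value s
  -- bound the left-hand side
  have hLHS : A - β ^ 2 - β * ε / 2 - 7 * ε ^ 2 / 16 ≤ |A| + |β| / 2 := by
    have h1 : A ≤ |A| := le_abs_self A
    have h2 : -(β * ε) ≤ |β| * ε := by
      have := neg_abs_le β
      nlinarith
    have h3 : |β| * ε ≤ |β| := by
      nlinarith [abs_nonneg β]
    nlinarith [sq_nonneg β, sq_nonneg ε]
  -- completing the square
  have hsq : -β * (n : ℝ) * ε + (n : ℝ) ^ 2 * ε ^ 2 / 8 ≥ -2 * β ^ 2 := by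
    nlinarith [sq_nonneg ((n : ℝ) * ε - 4 * β)]
  have h8 : 0 ≤ (n : ℝ) ^ 2 * ε ^ 2 / 8 := by positivity
  have h34 : 0 ≤ 3 * (n : ℝ) * ε ^ 2 / 4 := by positivity
  by_cases hcase : M ≤ (n : ℝ) * ε
  · -- large n·ε : the quadratic term dominates
    have hbig : (n : ℝ) ^ 2 * ε ^ 2 / 8 ≥ D := by nlinarith
    have hcpos : 0 < c' / (2 * Real.pi * ε * s) := by positivity
    linarith [hDdef]
  · -- small n·ε : the 1/(ε√n) term dominates
    push_neg at hcase
    have hdenom : 0 < 2 * Real.pi * ε * s := by positivity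
    have hsqlt : (2 * Real.pi * ε * s) ^ 2 < (c' / D) ^ 2 := by
      have e1 : (2 * Real.pi * ε * s) ^ 2 = 4 * Real.pi ^ 2 * ((n : ℝ) * ε) * ε := by
        have : (2 * Real.pi * ε * s) ^ 2 = (2 * Real.pi * ε) ^ 2 * s ^ 2 := by ring
        rw [this, hs2]; ring
      have e2 : 4 * Real.pi ^ 2 * M * (c' ^ 2 / (4 * Real.pi ^ 2 * D ^ 2 * M)) = (c' / D) ^ 2 := by
        field_simp
      rw [e1, ← e2]
      have hMεpos : 0 < 4 * Real.pi ^ 2 * M := by positivity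
      have step1 : 4 * Real.pi ^ 2 * ((n : ℝ) * ε) * ε < 4 * Real.pi ^ 2 * M * ε := by
        have hprod : 0 < 4 * Real.pi ^ 2 * (M - (n : ℝ) * ε) * ε :=
          mul_pos (mul_pos (by positivity) (sub_pos.mpr hcase)) hε
        nlinarith [hprod]
      have step2 : 4 * Real.pi ^ 2 * M * ε < 4 * Real.pi ^ 2 * M * (c' ^ 2 / (4 * Real.pi ^ 2 * D ^ 2 * M)) := by
        exact (mul_lt_mul_iff_right₀ hMεpos).mpr hε₁
      linarith
    have hlt : 2 * Real.pi * ε * s < c' / D :=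
      lt_of_pow_lt_pow_left₀ 2 (by positivity) hsqlt
    have hct : D < c' / (2 * Real.pi * ε * s) := by
      rw [lt_div_iff₀ hdenom]
      have := (lt_div_iff₀ hD).mp hlt
      linarith
    linarith [hDdef]
end

section
/- Let ε > 0 and suppose f ∈ F_ε (entire with ∫|f|² e^{-|z|²/ε} < ∞) is a polynomial satisfying the equation -β M_ε f + (1/4)(M_ε² f + ε M_ε f) + (G/2) f̄(ε∂_z)[f²(z/2)] = μ f for some real μ, where M_ε f = ε∂_z(zf), f̄(ε∂_z)[g] = Σ_k conj(a_k)(ε∂_z)^k g for f = Σ_k a_k z^k, and f²(z/2) denotes the function z ↦ f(z/2)². If G > 0, then f is a monomial: f(z) = a_n z^n for some n. -/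
open Polynomial

private lemma iter_deriv_coeff (ε : ℂ) (k : ℕ) (g : Polynomial ℂ) (j : ℕ) :
    ((fun g => Polynomial.C ε * Polynomial.derivative g)^[k] g).coeff j
      = ε ^ k * (∏ i ∈ Finset.range k, ((j + 1 + i : ℕ) : ℂ)) * g.coeff (j + k) := by
  induction k generalizing g with
  | zero => simp
  | succ k ih =>
      rw [Function.iterate_succ_apply, ih, Polynomial.coeff_C_mul,
        Polynomial.coeff_derivative, Finset.prod_range_succ]
      have : j + k + 1 = j + (k + 1) := by ring
      rw [this]
      push_cast
      ring

/-- A polynomial solution of the monomial-form Euler-Lagrange equation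
`-β M_ε f + (1/4)(M_ε² f + ε M_ε f) + (G/2) f̄(ε∂_z)[f²(z/2)] = μ f`
must be a monomial. Here `M_ε f = ε ∂_z (z f)` and
`f̄(ε∂_z)[g] = Σ_k conj(a_k) (ε ∂_z)^k g` for `f = Σ_k a_k z^k`. -/
theorem stmt_16 (ε β G μ : ℝ) (hε : 0 < ε) (hG : 0 < G) (f : Polynomial ℂ)
    (Mf : Polynomial ℂ → Polynomial ℂ)
    (hMf : ∀ g : Polynomial ℂ, Mf g = Polynomial.C (ε : ℂ) * Polynomial.derivative (Polynomial.X * g))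
    (N : Polynomial ℂ)
    (hN : N = ∑ k ∈ f.support, Polynomial.C ((starRingEnd ℂ) (f.coeff k)) *
        ((fun g => Polynomial.C (ε : ℂ) * Polynomial.derivative g)^[k]
          ((f.comp (Polynomial.C (1 / 2 : ℂ) * Polynomial.X)) ^ 2)))
    (heq : Polynomial.C (-(β : ℂ)) * Mf f
        + Polynomial.C (1 / 4 : ℂ) * (Mf (Mf f) + Polynomial.C (ε : ℂ) * Mf f)
        + Polynomial.C ((G : ℂ) / 2) * N
      = Polynomial.C (μ : ℂ) * f) :
    ∃ (n : ℕ) (a : ℂ), f = Polynomial.C a * Polynomial.X ^ n := by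
  by_cases hf0 : f = 0
  · exact ⟨0, 0, by simp [hf0]⟩
  set n := f.natDegree with hn
  set m := f.natTrailingDegree with hm
  have hmn : m ≤ n := f.natTrailingDegree_le_natDegree
  -- coefficients of Mf
  have hMc : ∀ (g : Polynomial ℂ) (i : ℕ), (Mf g).coeff i = ε * (g.coeff i * (i + 1)) := by
    intro g i
    rw [hMf, Polynomial.coeff_C_mul, Polynomial.coeff_derivative, Polynomial.coeff_X_mul]
  have key : m = n := by
    by_contra hne
    have hlt : m < n := lt_of_le_of_ne hmn hne
    -- the square polynomial
    set h := f.comp (Polynomial.C (1 / 2 : ℂ) * Polynomial.X) with hh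
    set q := h ^ 2 with hq
    have hdeg1 : (Polynomial.C (1 / 2 : ℂ) * Polynomial.X).natDegree = 1 := by simp
    have hhd : h.natDegree = n := by rw [hh, natDegree_comp, hdeg1, mul_one]
    have hhl : h.leadingCoeff ≠ 0 := by
      rw [hh, leadingCoeff_comp (by rw [hdeg1]; exact one_ne_zero)]
      have : (Polynomial.C (1 / 2 : ℂ) * Polynomial.X).leadingCoeff = 1 / 2 := by
        simp [leadingCoeff]
      rw [this]
      exact mul_ne_zero (leadingCoeff_ne_zero.mpr hf0) (pow_ne_zero _ (by norm_num))
    have hqd : q.natDegree = 2 * n := by rw [hq, natDegree_pow, hhd]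
    have hql : q.coeff (2 * n) ≠ 0 := by
      have : q.coeff (2 * n) = q.leadingCoeff := by rw [leadingCoeff, hqd]
      rw [this, hq, leadingCoeff_pow]
      exact pow_ne_zero _ hhl
    set j := 2 * n - m with hj
    have hjm : j + m = 2 * n := by omega
    have hjn : n < j := by omega
    have hfj : f.coeff j = 0 := coeff_eq_zero_of_natDegree_lt hjn
    -- N coeff at j
    have hNc : N.coeff j = (starRingEnd ℂ) (f.coeff m) * (ε ^ m *
        (∏ i ∈ Finset.range m, ((j + 1 + i : ℕ) : ℂ)) * q.coeff (2 * n)) := by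
      rw [hN, Polynomial.finset_sum_coeff]
      rw [Finset.sum_eq_single m]
      · rw [Polynomial.coeff_C_mul, iter_deriv_coeff, hjm]
      · intro k hk hkm
        have hmk : m < k := lt_of_le_of_ne (natTrailingDegree_le_of_mem_supp k hk) (Ne.symm hkm)
        rw [Polynomial.coeff_C_mul, iter_deriv_coeff]
        have : q.coeff (j + k) = 0 := by
          apply coeff_eq_zero_of_natDegree_lt
          omega
        rw [this, mul_zero, mul_zero]
      · intro hm'
        exact absurd (natTrailingDegree_mem_support_of_nonzero hf0) hm'
    have hNne : N.coeff j ≠ 0 := by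
      rw [hNc]
      apply mul_ne_zero
      · have := trailingCoeff_nonzero_iff_nonzero.mpr hf0
        rw [trailingCoeff] at this
        simpa only [ne_eq, _root_.map_eq_zero] using this
      apply mul_ne_zero (mul_ne_zero (pow_ne_zero _ (by exact_mod_cast hε.ne')) ?_) hql
      rw [Finset.prod_ne_zero_iff]
      intro i _
      have : (j + 1 + i : ℕ) ≠ 0 := by omega
      exact_mod_cast this
    -- take coeff j of the equation
    have := congrArg (fun p => Polynomial.coeff p j) heq
    simp only [Polynomial.coeff_add, Polynomial.coeff_C_mul, hMc, hfj] at this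
    rw [hNc] at this
    simp only [mul_zero, zero_mul, zero_add, add_zero, zero_mul] at this
    rw [← hNc] at this
    have hG2 : ((G : ℂ) / 2) ≠ 0 := by
      apply div_ne_zero _ two_ne_zero
      exact_mod_cast hG.ne'
    exact hNne ((mul_eq_zero.mp this).resolve_left hG2)
  · refine ⟨n, f.coeff n, ?_⟩
    ext i
    rw [Polynomial.coeff_C_mul, Polynomial.coeff_X_pow]
    by_cases hi : i = n
    · simp [hi]
    · simp only [hi, if_false, mul_zero]
      by_contra hne
      have hmem : i ∈ f.support := Polynomial.mem_support_iff.mpr hne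
      have h1 : i ≤ n := le_natDegree_of_mem_supp i hmem
      have h2 : m ≤ i := natTrailingDegree_le_of_mem_supp i hmem
      omega
end
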